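/- Let H ∈ k⟦X⟧ have constant coefficient 0 and coefficient of X equal to 1 (i.e. H = X + Σ_{n≥2} h_n X^n). (a) For every c ∈ k with c ≠ 0 there exists a unique Φ ∈ k⟦X⟧ with constant coefficient 0 and coefficient of X equal to c such that H∘Φ = Φ′·H. (b) Any two order-1 solutions commute: if Φ₁, Φ₂ have order 1 and satisfy H∘Φᵢ = Φᵢ′·H for i = 1, 2, then Φ₁∘Φ₂ = Φ₂∘Φ₁. Consequently the group of order-1 solutions of the Aczél–Jabotinsky equation with generator H is commutative and isomorphic to the multiplicative group k^× via Φ ↦ (coefficient of X in Φ). -/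

import Mathlib

open PowerSeries

variable {k : Type*} [Field k] [CharZero k]

/-- Substitution of `g` (with zero constant coefficient) into `f`. -/
noncomputable def comp (f g : PowerSeries k) : PowerSeries k :=
  PowerSeries.mk fun m => ∑ n ∈ Finset.range (m + 1),
    PowerSeries.coeff n f * PowerSeries.coeff m (g ^ n)

open Finset

lemma aj_coeff_comp (f g : PowerSeries k) (m : ℕ) :
    coeff m (comp f g) = ∑ n ∈ range (m + 1), coeff n f * coeff m (g ^ n) := by
  simp [comp]

lemma aj_coeff_pow_eq_zero {g : PowerSeries k} (hg : constantCoeff g = 0)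
    {m n : ℕ} (h : m < n) : coeff m (g ^ n) = 0 := by
  have hdvd : (X : PowerSeries k) ^ n ∣ g ^ n :=
    pow_dvd_pow_of_dvd (PowerSeries.X_dvd_iff.mpr hg) n
  exact PowerSeries.X_pow_dvd_iff.mp hdvd m h

lemma aj_coeff_comp_extend {g : PowerSeries k} (hg : constantCoeff g = 0)
    (f : PowerSeries k) {m N : ℕ} (hm : m < N) :
    coeff m (comp f g) = ∑ n ∈ range N, coeff n f * coeff m (g ^ n) := by
  rw [aj_coeff_comp]
  apply Finset.sum_subset (Finset.range_subset_range.mpr hm)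
  intro i _ hni
  rw [aj_coeff_pow_eq_zero hg (by simpa using hni), mul_zero]

lemma aj_coeff_aeval {g : PowerSeries k} (hg : constantCoeff g = 0)
    (P : Polynomial k) (m : ℕ) :
    coeff m (Polynomial.aeval g P) = ∑ n ∈ range (m + 1), P.coeff n * coeff m (g ^ n) := by
  have hPN : P.natDegree < max (P.natDegree + 1) (m + 1) :=
    lt_of_lt_of_le (Nat.lt_succ_self _) (le_max_left _ _)
  rw [Polynomial.aeval_eq_sum_range' hPN, map_sum]
  have h1 : ∀ n ∈ range (max (P.natDegree + 1) (m + 1)),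
      coeff m (P.coeff n • g ^ n) = P.coeff n * coeff m (g ^ n) := by
    intro n _; rw [map_smul, smul_eq_mul]
  rw [Finset.sum_congr rfl h1]
  symm
  apply Finset.sum_subset (Finset.range_subset_range.mpr (le_max_right _ _))
  intro i _ hni
  rw [aj_coeff_pow_eq_zero hg (by simpa using hni), mul_zero]

lemma aj_coeff_comp_aeval {g : PowerSeries k} (hg : constantCoeff g = 0)
    (f : PowerSeries k) {m N : ℕ} (hm : m < N) :
    coeff m (comp f g) = coeff m (Polynomial.aeval g (trunc N f)) := by
  rw [aj_coeff_aeval hg, aj_coeff_comp]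
  refine Finset.sum_congr rfl fun n hn => ?_
  rw [coeff_trunc, if_pos (lt_of_lt_of_le (mem_range.mp hn) hm)]

lemma aj_one_comp (g : PowerSeries k) : comp 1 g = 1 := by
  ext m
  rw [aj_coeff_comp, Finset.sum_eq_single 0]
  · simp
  · intro n _ hn
    rw [PowerSeries.coeff_one, if_neg hn, zero_mul]
  · intro h; exact absurd (Finset.mem_range.mpr (Nat.succ_pos m)) h

lemma aj_mul_comp {h : PowerSeries k} (hh : constantCoeff h = 0) (f g : PowerSeries k) :
    comp (f * g) h = comp f h * comp g h := by
  ext m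
  rw [aj_coeff_comp_aeval hh (f * g) (Nat.lt_succ_self m), PowerSeries.coeff_mul]
  have hR : ∀ p ∈ antidiagonal m,
      coeff p.1 (comp f h) * coeff p.2 (comp g h)
        = coeff p.1 (Polynomial.aeval h (trunc (m + 1) f))
          * coeff p.2 (Polynomial.aeval h (trunc (m + 1) g)) := by
    intro p hp
    have h1 : p.1 < m + 1 := by
      have := Finset.HasAntidiagonal.mem_antidiagonal.mp hp; omega
    have h2 : p.2 < m + 1 := by
      have := Finset.HasAntidiagonal.mem_antidiagonal.mp hp; omega
    rw [aj_coeff_comp_aeval hh f h1, aj_coeff_comp_aeval hh g h2]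
  rw [Finset.sum_congr rfl hR, ← PowerSeries.coeff_mul, ← map_mul]
  rw [aj_coeff_aeval hh, aj_coeff_aeval hh]
  refine Finset.sum_congr rfl fun n hn => ?_
  have hnm : n < m + 1 := mem_range.mp hn
  congr 1
  rw [coeff_trunc, if_pos hnm, Polynomial.coeff_mul, PowerSeries.coeff_mul]
  refine Finset.sum_congr rfl fun p hp => ?_
  have hp' := Finset.HasAntidiagonal.mem_antidiagonal.mp hp
  rw [coeff_trunc, coeff_trunc, if_pos (by omega), if_pos (by omega)]

lemma aj_pow_comp {h : PowerSeries k} (hh : constantCoeff h = 0) (f : PowerSeries k)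
    (n : ℕ) : comp (f ^ n) h = (comp f h) ^ n := by
  induction n with
  | zero => simpa using aj_one_comp h
  | succ n ih => rw [pow_succ, aj_mul_comp hh, ih, pow_succ]

lemma aj_comp_assoc {g h : PowerSeries k} (hg : constantCoeff g = 0)
    (hh : constantCoeff h = 0) (f : PowerSeries k) :
    comp (comp f g) h = comp f (comp g h) := by
  ext m
  calc coeff m (comp (comp f g) h)
      = ∑ n ∈ range (m + 1), (∑ p ∈ range (m + 1),
          coeff p f * coeff n (g ^ p)) * coeff m (h ^ n) := by
        rw [aj_coeff_comp]
        exact Finset.sum_congr rfl fun n hn => by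
          rw [aj_coeff_comp_extend hg f (mem_range.mp hn)]
    _ = ∑ p ∈ range (m + 1), coeff p f *
          ∑ n ∈ range (m + 1), coeff n (g ^ p) * coeff m (h ^ n) := by
        simp_rw [Finset.sum_mul, Finset.mul_sum]
        rw [Finset.sum_comm]
        simp_rw [mul_assoc]
    _ = ∑ p ∈ range (m + 1), coeff p f * coeff m ((comp g h) ^ p) := by
        refine Finset.sum_congr rfl fun p _ => ?_
        rw [← aj_coeff_comp, aj_pow_comp hh]
    _ = coeff m (comp f (comp g h)) := (aj_coeff_comp f (comp g h) m).symm

lemma aj_coeff_derivativeFun (f : PowerSeries k) (n : ℕ) :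
    coeff n (derivativeFun f) = coeff (n + 1) f * (n + 1) :=
  coeff_derivative f n

lemma aj_derivativeFun_pow (g : PowerSeries k) (n : ℕ) :
    derivativeFun (g ^ (n + 1)) = (n + 1) • (g ^ n * derivativeFun g) := by
  induction n with
  | zero => simp
  | succ n ih =>
      rw [pow_succ, derivativeFun_mul, ih]
      simp only [smul_eq_mul, nsmul_eq_mul]
      push_cast
      ring

lemma aj_coeff_pow_mul_derivative (g : PowerSeries k) (p m : ℕ) :
    ((p : k) + 1) * coeff m (g ^ p * derivativeFun g)
      = ((m : k) + 1) * coeff (m + 1) (g ^ (p + 1)) := by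
  have h := congrArg (coeff m) (aj_derivativeFun_pow g p)
  rw [aj_coeff_derivativeFun, map_nsmul, nsmul_eq_mul] at h
  push_cast at h
  rw [← h]; ring

lemma aj_derivativeFun_comp {g : PowerSeries k} (hg : constantCoeff g = 0)
    (f : PowerSeries k) :
    derivativeFun (comp f g) = comp (derivativeFun f) g * derivativeFun g := by
  ext m
  rw [aj_coeff_derivativeFun, aj_coeff_comp, Finset.sum_range_succ']
  have h0 : coeff (m + 1) ((g : PowerSeries k) ^ 0) = 0 := by
    rw [pow_zero, PowerSeries.coeff_one, if_neg (Nat.succ_ne_zero m)]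
  rw [h0, mul_zero, add_zero, Finset.sum_mul]
  rw [PowerSeries.coeff_mul]
  have hR : ∀ q ∈ antidiagonal m,
      coeff q.1 (comp (derivativeFun f) g) * coeff q.2 (derivativeFun g)
        = ∑ p ∈ range (m + 1),
            coeff p (derivativeFun f) * coeff q.1 (g ^ p) * coeff q.2 (derivativeFun g) := by
    intro q hq
    have h1 : q.1 < m + 1 := by have := Finset.HasAntidiagonal.mem_antidiagonal.mp hq; omega
    rw [aj_coeff_comp_extend hg _ h1, Finset.sum_mul]
  rw [Finset.sum_congr rfl hR, Finset.sum_comm]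
  refine Finset.sum_congr rfl fun p _ => ?_
  have key : ∑ q ∈ antidiagonal m, coeff q.1 (g ^ p) * coeff q.2 (derivativeFun g)
      = coeff m (g ^ p * derivativeFun g) := (PowerSeries.coeff_mul m _ _).symm
  symm
  calc ∑ q ∈ antidiagonal m,
        coeff p (derivativeFun f) * coeff q.1 (g ^ p) * coeff q.2 (derivativeFun g)
      = coeff p (derivativeFun f) * coeff m (g ^ p * derivativeFun g) := by
        rw [← key, Finset.mul_sum]; exact Finset.sum_congr rfl fun q _ => by ring
    _ = coeff (p + 1) f * (((p : k) + 1) * coeff m (g ^ p * derivativeFun g)) := by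
        rw [aj_coeff_derivativeFun]; push_cast; ring
    _ = coeff (p + 1) f * coeff (m + 1) (g ^ (p + 1)) * ((m : k) + 1) := by
        rw [aj_coeff_pow_mul_derivative]; ring

noncomputable def ajS₁ (H A : PowerSeries k) (m : ℕ) : k :=
  ∑ n ∈ Finset.Ico 2 (m + 1), coeff n H * coeff m (A ^ n)

noncomputable def ajS₂ (H A : PowerSeries k) (m : ℕ) : k :=
  ∑ j ∈ Finset.Ico 2 (m + 1),
    coeff j H * (coeff (m - j + 1) A * ((m - j : ℕ) + 1 : k))

lemma aj_key1 {H : PowerSeries k} (hH0 : constantCoeff H = 0) (hH1 : coeff 1 H = 1)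
    {A : PowerSeries k} {m : ℕ} (hm : 1 ≤ m) :
    coeff m (comp H A) = coeff m A + ajS₁ H A m := by
  rw [aj_coeff_comp, Finset.range_eq_Ico,
    Finset.sum_eq_sum_Ico_succ_bot (by omega : 0 < m + 1),
    Finset.sum_eq_sum_Ico_succ_bot (by omega : 1 < m + 1)]
  rw [coeff_zero_eq_constantCoeff, hH0, zero_mul, zero_add, hH1, pow_one, one_mul]
  rfl

lemma aj_key2 {H : PowerSeries k} (hH0 : constantCoeff H = 0) (hH1 : coeff 1 H = 1)
    {A : PowerSeries k} {m : ℕ} (hm : 1 ≤ m) :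
    coeff m (derivativeFun A * H) = (m : k) * coeff m A + ajS₂ H A m := by
  rw [mul_comm, PowerSeries.coeff_mul, Finset.Nat.sum_antidiagonal_eq_sum_range_succ_mk,
    Finset.range_eq_Ico,
    Finset.sum_eq_sum_Ico_succ_bot (by omega : 0 < m + 1),
    Finset.sum_eq_sum_Ico_succ_bot (by omega : 1 < m + 1)]
  rw [coeff_zero_eq_constantCoeff, hH0, zero_mul, zero_add, hH1, one_mul]
  have h1 : m - 1 + 1 = m := by omega
  rw [aj_coeff_derivativeFun, h1]
  have h2 : ((m - 1 : ℕ) : k) + 1 = (m : k) := by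
    have : ((m - 1 : ℕ) : k) = (m : k) - 1 := by
      rw [Nat.cast_sub hm, Nat.cast_one]
    rw [this]; ring
  rw [h2, mul_comm (coeff m A) (m : k)]
  congr 1
  refine Finset.sum_congr rfl fun j hj => ?_
  rw [aj_coeff_derivativeFun, mul_comm (coeff j H)]

lemma aj_pow_coeff_congr {A B : PowerSeries k} (hA : constantCoeff A = 0)
    (hB : constantCoeff B = 0) {m : ℕ} (hAB : ∀ i < m, coeff i A = coeff i B)
    {n : ℕ} (hn : 2 ≤ n) : coeff m (A ^ n) = coeff m (B ^ n) := by
  have h : A ^ n - B ^ n = (∑ i ∈ range n, A ^ i * B ^ (n - 1 - i)) * (A - B) :=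
    (geom_sum₂_mul A B n).symm
  have hz : coeff m (A ^ n - B ^ n) = 0 := by
    rw [h, PowerSeries.coeff_mul]
    apply Finset.sum_eq_zero
    intro p hp
    have hp' := Finset.HasAntidiagonal.mem_antidiagonal.mp hp
    by_cases h2 : p.2 < m
    · rw [map_sub, hAB _ h2, sub_self, mul_zero]
    · have h1 : p.1 = 0 := by omega
      have hgeom : coeff 0 (∑ i ∈ range n, A ^ i * B ^ (n - 1 - i)) = 0 := by
        rw [map_sum]
        apply Finset.sum_eq_zero
        intro i _
        rw [coeff_zero_eq_constantCoeff, map_mul, map_pow, map_pow, hA, hB]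
        by_cases hi0 : i = 0
        · subst hi0; rw [pow_zero, one_mul, zero_pow (by omega : n - 1 - 0 ≠ 0)]
        · rw [zero_pow hi0, zero_mul]
      rw [h1, hgeom, zero_mul]
  rw [map_sub, sub_eq_zero] at hz
  exact hz

lemma aj_S₁_congr {H A B : PowerSeries k} (hA : constantCoeff A = 0)
    (hB : constantCoeff B = 0) {m : ℕ} (hAB : ∀ i < m, coeff i A = coeff i B) :
    ajS₁ H A m = ajS₁ H B m := by
  refine Finset.sum_congr rfl fun n hn => ?_
  have := Finset.mem_Ico.mp hn
  rw [aj_pow_coeff_congr hA hB hAB this.1]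

lemma aj_S₂_congr {H A B : PowerSeries k} {m : ℕ}
    (hAB : ∀ i < m, coeff i A = coeff i B) :
    ajS₂ H A m = ajS₂ H B m := by
  refine Finset.sum_congr rfl fun j hj => ?_
  have hj' := Finset.mem_Ico.mp hj
  rw [hAB (m - j + 1) (by omega)]

lemma aj_cast_ne {m : ℕ} (hm : 2 ≤ m) : ((m : k) - 1) ≠ 0 := by
  rw [sub_ne_zero]
  intro h
  have : (m : k) = ((1 : ℕ) : k) := by rw [h, Nat.cast_one]
  have := Nat.cast_injective (R := k) this
  omega

lemma aj_sol_coeff {H : PowerSeries k} (hH0 : constantCoeff H = 0)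
    (hH1 : coeff 1 H = 1) {A : PowerSeries k}
    (hsol : comp H A = derivativeFun A * H) {m : ℕ} (hm : 2 ≤ m) :
    coeff m A = ((m : k) - 1)⁻¹ * (ajS₁ H A m - ajS₂ H A m) := by
  have h := congrArg (coeff m) hsol
  rw [aj_key1 hH0 hH1 (by omega), aj_key2 hH0 hH1 (by omega)] at h
  have hne := aj_cast_ne (k := k) hm
  field_simp
  linear_combination ((m:k) - 1) * 0 - h

lemma aj_unique {H : PowerSeries k} (hH0 : constantCoeff H = 0)
    (hH1 : coeff 1 H = 1) {A B : PowerSeries k}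
    (hA0 : constantCoeff A = 0) (hB0 : constantCoeff B = 0)
    (h1 : coeff 1 A = coeff 1 B)
    (hAsol : comp H A = derivativeFun A * H)
    (hBsol : comp H B = derivativeFun B * H) : A = B := by
  ext m
  induction m using Nat.strong_induction_on with
  | _ m ih =>
    match m with
    | 0 => rw [coeff_zero_eq_constantCoeff, hA0, hB0]
    | 1 => exact h1
    | (m + 2) =>
        have hm : 2 ≤ m + 2 := by omega
        rw [aj_sol_coeff hH0 hH1 hAsol hm, aj_sol_coeff hH0 hH1 hBsol hm,
          aj_S₁_congr hA0 hB0 (fun i hi => ih i hi),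
          aj_S₂_congr (fun i hi => ih i hi)]

noncomputable def ajNext (H : PowerSeries k) (c : k) (m : ℕ) (P : PowerSeries k) : k :=
  if m = 0 then 0 else if m = 1 then c
  else ((m : k) - 1)⁻¹ * (ajS₁ H P m - ajS₂ H P m)

noncomputable def ajT (H : PowerSeries k) (c : k) : ℕ → PowerSeries k
  | 0 => 0
  | m + 1 => ajT H c m + PowerSeries.C (ajNext H c m (ajT H c m)) * X ^ m

noncomputable def ajPhi (H : PowerSeries k) (c : k) : PowerSeries k :=
  PowerSeries.mk fun m => ajNext H c m (ajT H c m)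

lemma ajT_coeff_ge (H : PowerSeries k) (c : k) :
    ∀ m i, m ≤ i → coeff i (ajT H c m) = 0 := by
  intro m
  induction m with
  | zero => intro i _; simp [ajT]
  | succ m ih =>
      intro i hi
      rw [ajT, map_add, ih i (by omega), zero_add, coeff_C_mul, coeff_X_pow,
        if_neg (by omega), mul_zero]

lemma ajT_coeff_lt (H : PowerSeries k) (c : k) :
    ∀ m i, i < m → coeff i (ajT H c m) = coeff i (ajPhi H c) := by
  intro m
  induction m with
  | zero => intro i hi; omega
  | succ m ih =>
      intro i hi
      rw [ajT, map_add, coeff_C_mul, coeff_X_pow]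
      by_cases h : i = m
      · subst h
        rw [ajT_coeff_ge H c i i le_rfl, zero_add, if_pos rfl, mul_one, ajPhi, coeff_mk]
      · rw [if_neg h, mul_zero, add_zero, ih i (by omega)]

lemma ajPhi_const (H : PowerSeries k) (c : k) : constantCoeff (ajPhi H c) = 0 := by
  rw [← coeff_zero_eq_constantCoeff, ajPhi, coeff_mk, ajNext, if_pos rfl]

lemma ajPhi_one (H : PowerSeries k) (c : k) : coeff 1 (ajPhi H c) = c := by
  rw [ajPhi, coeff_mk, ajNext, if_neg one_ne_zero, if_pos rfl]

lemma ajT_const (H : PowerSeries k) (c : k) (m : ℕ) :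
    constantCoeff (ajT H c m) = 0 := by
  rw [← coeff_zero_eq_constantCoeff]
  cases m with
  | zero => simp [ajT]
  | succ n =>
      rw [ajT_coeff_lt H c (n + 1) 0 (by omega), coeff_zero_eq_constantCoeff,
        ajPhi_const]

lemma ajPhi_sol {H : PowerSeries k} (hH0 : constantCoeff H = 0)
    (hH1 : coeff 1 H = 1) (c : k) :
    comp H (ajPhi H c) = derivativeFun (ajPhi H c) * H := by
  set Φ := ajPhi H c with hΦ
  ext m
  match m with
  | 0 =>
      have l : coeff 0 (comp H Φ) = 0 := by
        rw [aj_coeff_comp, Finset.sum_range_one, coeff_zero_eq_constantCoeff, hH0,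
          zero_mul]
      have r : coeff 0 (derivativeFun Φ * H) = 0 := by
        rw [coeff_zero_eq_constantCoeff, map_mul, hH0, mul_zero]
      rw [l, r]
  | 1 =>
      rw [aj_key1 hH0 hH1 le_rfl, aj_key2 hH0 hH1 le_rfl]
      have h1 : ajS₁ H Φ 1 = 0 := by simp [ajS₁]
      have h2 : ajS₂ H Φ 1 = 0 := by simp [ajS₂]
      rw [h1, h2]
      push_cast
      ring
  | (m + 2) =>
      have hm2 : (2 : ℕ) ≤ m + 2 := by omega
      rw [aj_key1 hH0 hH1 (by omega), aj_key2 hH0 hH1 (by omega)]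
      have hcoeff : coeff (m + 2) Φ
          = (((m + 2 : ℕ) : k) - 1)⁻¹ * (ajS₁ H Φ (m + 2) - ajS₂ H Φ (m + 2)) := by
        rw [hΦ, ajPhi, coeff_mk, ajNext, if_neg (by omega), if_neg (by omega)]
        have hagree : ∀ i < m + 2, coeff i (ajT H c (m + 2)) = coeff i (ajPhi H c) :=
          fun i hi => ajT_coeff_lt H c (m + 2) i hi
        rw [aj_S₁_congr (ajT_const H c (m + 2)) (ajPhi_const H c) hagree,
          aj_S₂_congr (A := ajT H c (m+2)) (B := ajPhi H c) hagree]
        rfl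
      have hne : (((m + 2 : ℕ) : k) - 1) ≠ 0 := aj_cast_ne hm2
      have hmul : (((m + 2 : ℕ) : k) - 1) * coeff (m + 2) Φ
          = ajS₁ H Φ (m + 2) - ajS₂ H Φ (m + 2) := by
        rw [hcoeff, ← mul_assoc, mul_inv_cancel₀ hne, one_mul]
      linear_combination -hmul

lemma aj_const_comp (f g : PowerSeries k) :
    constantCoeff (comp f g) = constantCoeff f := by
  rw [← coeff_zero_eq_constantCoeff, aj_coeff_comp, Finset.sum_range_one]
  simp

lemma aj_coeff_one_comp (f g : PowerSeries k) :
    coeff 1 (comp f g) = coeff 1 f * coeff 1 g := by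
  rw [aj_coeff_comp]
  rw [show (1 + 1 : ℕ) = 2 from rfl, Finset.sum_range_succ, Finset.sum_range_one]
  simp

/-- For a generator `H = X + Σ_{n ≥ 2} h_n X^n`:
(a) for every `c ≠ 0` there is a unique order-1 solution `Φ` of
`H∘Φ = Φ′·H` with linear coefficient `c`;
(b) any two order-1 solutions commute; moreover `Φ ↦ coeff 1 Φ` is
multiplicative on solutions, so the group of solutions is commutative and
isomorphic to `kˣ`. -/
theorem aczel_jabotinsky_solution_group_l_zero (H : PowerSeries k)
    (hH0 : constantCoeff H = 0) (hH1 : coeff 1 H = 1) :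
    (∀ c : k, c ≠ 0 → ∃! Φ : PowerSeries k,
        constantCoeff Φ = 0 ∧ coeff 1 Φ = c ∧
        comp H Φ = derivativeFun Φ * H) ∧
    (∀ Φ₁ Φ₂ : PowerSeries k,
        constantCoeff Φ₁ = 0 → coeff 1 Φ₁ ≠ 0 →
        constantCoeff Φ₂ = 0 → coeff 1 Φ₂ ≠ 0 →
        comp H Φ₁ = derivativeFun Φ₁ * H →
        comp H Φ₂ = derivativeFun Φ₂ * H →
        comp Φ₁ Φ₂ = comp Φ₂ Φ₁ ∧
          coeff 1 (comp Φ₁ Φ₂) = coeff 1 Φ₁ * coeff 1 Φ₂) := by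
  constructor
  · intro c _
    refine ⟨ajPhi H c, ⟨ajPhi_const H c, ajPhi_one H c, ajPhi_sol hH0 hH1 c⟩, ?_⟩
    rintro Ψ ⟨h0, h1, hs⟩
    exact aj_unique hH0 hH1 h0 (ajPhi_const H c)
      (by rw [h1, ajPhi_one]) hs (ajPhi_sol hH0 hH1 c)
  · intro Φ₁ Φ₂ h10 h11 h20 h21 hs1 hs2
    have hsol12 : comp H (comp Φ₁ Φ₂) = derivativeFun (comp Φ₁ Φ₂) * H := by
      rw [← aj_comp_assoc h10 h20, hs1, aj_mul_comp h20, hs2,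
        aj_derivativeFun_comp h20, mul_assoc]
    have hsol21 : comp H (comp Φ₂ Φ₁) = derivativeFun (comp Φ₂ Φ₁) * H := by
      rw [← aj_comp_assoc h20 h10, hs2, aj_mul_comp h10, hs1,
        aj_derivativeFun_comp h10, mul_assoc]
    refine ⟨?_, aj_coeff_one_comp Φ₁ Φ₂⟩
    apply aj_unique hH0 hH1 _ _ _ hsol12 hsol21
    · rw [aj_const_comp, h10]
    · rw [aj_const_comp, h20]
    · rw [aj_coeff_one_comp, aj_coeff_one_comp, mul_comm]
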